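/- The absolutely continuous part m_{α,β}(dx) = β e^{-α-βx} √(α/(βx)) I₁(2√(αβx)) dx of the Bessel distribution has total mass m_{α,β}([0,∞)) = 1 - e^{-α}, and for every u with Re u ≤ 0 its transform equals exp(αu/(β-u)) - e^{-α}. -/

import Mathlib

open MeasureTheory ENNReal

open Set Filter

-- tendsto x^n e^{-bx} -> 0
lemma aux_tendsto_pow_mul_exp (n : ℕ) {b : ℝ} (hb : 0 < b) :
    Tendsto (fun x : ℝ => x ^ n * Real.exp (-(b * x))) atTop (nhds 0) := by
  have h := (Real.tendsto_pow_mul_exp_neg_atTop_nhds_zero n).comp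
    (tendsto_id.const_mul_atTop hb)
  have h2 := h.const_mul (1 / b ^ n)
  rw [mul_zero] at h2
  refine h2.congr fun x => ?_
  simp only [Function.comp_apply, id_eq]
  rw [mul_pow]
  field_simp

-- integrability of x^n e^{-bx} on Ioi 0
lemma aux_integrableOn_pow_mul_exp (n : ℕ) {b : ℝ} (hb : 0 < b) :
    IntegrableOn (fun x : ℝ => x ^ n * Real.exp (-(b * x))) (Ioi 0) := by
  apply integrable_of_isBigO_exp_neg (half_pos hb)
  · exact ((continuous_pow n).mul (Real.continuous_exp.comp (continuous_const.mul continuous_id).neg)).continuousOn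
  · rw [Asymptotics.isBigO_iff]
    refine ⟨1, ?_⟩
    have h := aux_tendsto_pow_mul_exp n (half_pos hb)
    filter_upwards [(h.eventually (Metric.ball_mem_nhds 0 one_pos)), eventually_ge_atTop 0] with x hx hx0
    simp only [Metric.mem_ball, Real.dist_eq, sub_zero] at hx
    have : x ^ n * Real.exp (-(b * x)) = (x ^ n * Real.exp (-(b / 2 * x))) * Real.exp (-(b / 2 * x)) := by
      rw [mul_assoc, ← Real.exp_add]; ring_nf
    rw [this]
    rw [Real.norm_eq_abs, Real.norm_eq_abs, abs_mul]
    rw [neg_mul]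
    exact mul_le_mul_of_nonneg_right hx.le (abs_nonneg _)

-- complex integrability
lemma aux_integrableOn_pow_mul_cexp (n : ℕ) {z : ℂ} (hz : z.re < 0) :
    IntegrableOn (fun x : ℝ => (x : ℂ) ^ n * Complex.exp (z * x)) (Ioi 0) := by
  have hb : (0:ℝ) < -z.re := by linarith
  refine ((aux_integrableOn_pow_mul_exp n hb).mono' ?_ ?_)
  · exact (Continuous.aestronglyMeasurable (by fun_prop)).restrict
  · filter_upwards [ae_restrict_mem measurableSet_Ioi] with x hx
    simp only [norm_mul, Complex.norm_exp]
    rw [norm_pow, Complex.norm_real, Real.norm_eq_abs, abs_of_pos hx]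
    have : (z * x).re = z.re * x := by simp [Complex.mul_re]
    rw [this, neg_mul, neg_neg]

lemma aux_tendsto_pow_mul_cexp (n : ℕ) {z : ℂ} (hz : z.re < 0) :
    Tendsto (fun x : ℝ => (x : ℂ) ^ n * Complex.exp (z * x)) atTop (nhds 0) := by
  have hb : (0:ℝ) < -z.re := by linarith
  refine squeeze_zero_norm' (a := fun x : ℝ => x ^ n * Real.exp (-(-z.re * x)))
    ?_ (aux_tendsto_pow_mul_exp n hb)
  filter_upwards [eventually_ge_atTop (0:ℝ)] with x hx
  simp only [norm_mul, Complex.norm_exp]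
  rw [norm_pow, Complex.norm_real, Real.norm_eq_abs, abs_of_nonneg hx]
  have : (z * x).re = z.re * x := by simp [Complex.mul_re]
  rw [this, neg_mul, neg_neg]

lemma aux_integral_pow_mul_cexp (n : ℕ) {z : ℂ} (hz : z.re < 0) :
    ∫ x in Ioi (0:ℝ), (x : ℂ) ^ n * Complex.exp (z * x) = (n.factorial : ℂ) / (-z) ^ (n + 1) := by
  have hz0 : z ≠ 0 := fun h => by simp [h] at hz
  induction n with
  | zero =>
    have hder : ∀ x ∈ Ici (0:ℝ), HasDerivAt (fun x : ℝ => Complex.exp (z * x) / z)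
        ((x:ℂ) ^ 0 * Complex.exp (z * x)) x := by
      intro x _
      have h2 := ((((hasDerivAt_id ((x:ℝ):ℂ)).const_mul z).cexp).comp_ofReal).div_const z
      simp only [id_eq, mul_one] at h2
      simpa [pow_zero, one_mul, mul_comm, mul_div_cancel_left₀ _ hz0] using h2
    have htend : Tendsto (fun x : ℝ => Complex.exp (z * x) / z) atTop (nhds 0) := by
      simpa using (aux_tendsto_pow_mul_cexp 0 hz).div_const z
    have := integral_Ioi_of_hasDerivAt_of_tendsto' hder
      (aux_integrableOn_pow_mul_cexp 0 hz) htend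
    simp only [Complex.ofReal_zero, mul_zero, Complex.exp_zero] at this
    rw [this]
    simp [div_neg]
  | succ n ih =>
    have hder : ∀ x ∈ Ici (0:ℝ), HasDerivAt (fun x : ℝ => (x:ℂ) ^ (n+1) * Complex.exp (z * x))
        (((n:ℂ)+1) * (x:ℂ) ^ n * Complex.exp (z * x) + z * ((x:ℂ) ^ (n+1) * Complex.exp (z * x))) x := by
      intro x _
      have hpow : HasDerivAt (fun x : ℝ => (x:ℂ) ^ (n+1)) (((n:ℂ)+1) * (x:ℂ) ^ n) x := by
        simpa using (hasDerivAt_pow (n+1) ((x:ℝ):ℂ)).comp_ofReal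
      have hexp : HasDerivAt (fun x : ℝ => Complex.exp (z * x)) (Complex.exp (z * x) * z) x := by
        simpa using (((hasDerivAt_id ((x:ℝ):ℂ)).const_mul z).cexp).comp_ofReal
      have := hpow.mul hexp
      convert this using 1
      · rfl
      · rfl
      push_cast
      ring
    have htend := aux_tendsto_pow_mul_cexp (n+1) hz
    have hint : IntegrableOn (fun x : ℝ => ((n:ℂ)+1) * (x:ℂ) ^ n * Complex.exp (z * x)
        + z * ((x:ℂ) ^ (n+1) * Complex.exp (z * x))) (Ioi 0) := by
      apply Integrable.add
      · simpa [mul_assoc] using (aux_integrableOn_pow_mul_cexp n hz).const_mul ((n:ℂ)+1)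
      · exact (aux_integrableOn_pow_mul_cexp (n+1) hz).const_mul z
    have key := integral_Ioi_of_hasDerivAt_of_tendsto' hder hint htend
    simp only [Complex.ofReal_zero, zero_pow (Nat.succ_ne_zero n), zero_mul, sub_zero, mul_zero] at key
    rw [MeasureTheory.integral_add
        (by simpa [mul_assoc] using (aux_integrableOn_pow_mul_cexp n hz).const_mul ((n:ℂ)+1))
        ((aux_integrableOn_pow_mul_cexp (n+1) hz).const_mul z)] at key
    simp only [mul_assoc, integral_const_mul] at key
    rw [ih] at key
    have h2 : z * ∫ x in Ioi (0:ℝ), (x:ℂ) ^ (n+1) * Complex.exp (z * x)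
        = -(((n:ℂ)+1) * ((n.factorial : ℂ) / (-z) ^ (n + 1))) := by
      rw [eq_neg_iff_add_eq_zero]; linear_combination key
    have hI := (eq_inv_mul_iff_mul_eq₀ hz0).mpr h2
    rw [hI, Nat.factorial_succ, pow_succ]
    have hnz : (-z) ^ (n+1) ≠ 0 := pow_ne_zero _ (neg_ne_zero.mpr hz0)
    push_cast
    field_simp
    ring_nf
    simp only [inv_pow, mul_inv_cancel_right₀ (pow_ne_zero 2 hz0)]

lemma aux_integral_pow_mul_exp (n : ℕ) {b : ℝ} (hb : 0 < b) :
    ∫ x in Ioi (0:ℝ), x ^ n * Real.exp (-(b * x)) = (n.factorial : ℝ) / b ^ (n + 1) := by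
  have hz : ((-b : ℝ) : ℂ).re < 0 := by simpa using hb
  have h := aux_integral_pow_mul_cexp n hz
  rw [← Complex.ofReal_inj]
  have h0 : ∫ x in Ioi (0:ℝ), ((x ^ n * Real.exp (-(b * x)) : ℝ) : ℂ)
      = ((∫ x in Ioi (0:ℝ), x ^ n * Real.exp (-(b * x)) : ℝ) : ℂ) := integral_ofReal
  rw [← h0]
  have heq : ∀ x : ℝ, ((x ^ n * Real.exp (-(b * x)) : ℝ) : ℂ)
      = (x:ℂ) ^ n * Complex.exp (((-b:ℝ):ℂ) * x) := by
    intro x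
    rw [Complex.ofReal_mul, Complex.ofReal_pow, Complex.ofReal_exp]
    push_cast
    rw [neg_mul]
  simp_rw [heq]
  rw [h]
  push_cast
  norm_num

-- coefficients and gamma densities
noncomputable def besselCoef (α : ℝ) (n : ℕ) : ℝ := Real.exp (-α) * α ^ (n+1) / (n+1).factorial

noncomputable def gammaDens (β : ℝ) (n : ℕ) (x : ℝ) : ℝ :=
  β ^ (n+1) * x ^ n * Real.exp (-(β * x)) / n.factorial

lemma besselCoef_nonneg {α : ℝ} (hα : 0 < α) (n : ℕ) : 0 ≤ besselCoef α n := by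
  unfold besselCoef; positivity

lemma gammaDens_nonneg {β : ℝ} (hβ : 0 < β) (n : ℕ) {x : ℝ} (hx : 0 ≤ x) :
    0 ≤ gammaDens β n x := by
  unfold gammaDens; positivity

lemma aux_summable {α β : ℝ} (hα : 0 < α) (hβ : 0 < β) {x : ℝ} (hx : 0 ≤ x) :
    Summable (fun n => besselCoef α n * gammaDens β n x) := by
  have hsum := (Real.summable_pow_div_factorial (α * β * x)).mul_left
    (Real.exp (-α) * Real.exp (-(β * x)) * (α * β))
  refine hsum.of_nonneg_of_le
    (fun n => mul_nonneg (besselCoef_nonneg hα n) (gammaDens_nonneg hβ n hx)) (fun n => ?_)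
  have h1 : (0:ℝ) < n.factorial := by exact_mod_cast n.factorial_pos
  have h1' : (0:ℝ) < (n+1).factorial := by exact_mod_cast (n+1).factorial_pos
  have hrw : besselCoef α n * gammaDens β n x
      = (Real.exp (-α) * Real.exp (-(β * x)) * (α * β) * ((α * β * x) ^ n / n.factorial))
        / (n+1).factorial := by
    unfold besselCoef gammaDens
    rw [mul_pow, mul_pow]
    field_simp
    ring
  rw [hrw]
  refine div_le_self (by positivity) ?_
  exact_mod_cast Nat.one_le_iff_ne_zero.mpr (Nat.factorial_ne_zero (n+1))

/-- Modified Bessel function of the first kind of order 1. -/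
noncomputable def besselI1 (r : ℝ) : ℝ :=
  (r / 2) * ∑' k : ℕ, (r ^ 2 / 4) ^ k / (Nat.factorial k * Nat.factorial (k + 1))

lemma aux_density_eq {α β : ℝ} (hα : 0 < α) (hβ : 0 < β) {x : ℝ} (hx : 0 < x) :
    β * Real.exp (-α - β * x) * Real.sqrt (α / (β * x)) * besselI1 (2 * Real.sqrt (α * β * x))
      = ∑' n, besselCoef α n * gammaDens β n x := by
  have ht : 0 ≤ α * β * x := by positivity
  have hbx : β * x ≠ 0 := by positivity
  have hI : besselI1 (2 * Real.sqrt (α * β * x))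
      = Real.sqrt (α * β * x) * ∑' k : ℕ, (α * β * x) ^ k / (Nat.factorial k * Nat.factorial (k + 1)) := by
    unfold besselI1
    have h4 : (2 * Real.sqrt (α * β * x)) ^ 2 / 4 = α * β * x := by
      rw [mul_pow, Real.sq_sqrt ht]; ring
    rw [h4]
    ring_nf
  rw [hI]
  have hsq : Real.sqrt (α / (β * x)) * Real.sqrt (α * β * x) = α := by
    rw [← Real.sqrt_mul (by positivity) (α * β * x)]
    have : α / (β * x) * (α * β * x) = α ^ 2 := by field_simp
    rw [this, Real.sqrt_sq hα.le]
  have hmain : β * Real.exp (-α - β * x) * Real.sqrt (α / (β * x)) *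
      (Real.sqrt (α * β * x) * ∑' k : ℕ, (α * β * x) ^ k / (Nat.factorial k * Nat.factorial (k + 1)))
      = (β * Real.exp (-α - β * x) * α) * ∑' k : ℕ, (α * β * x) ^ k / (Nat.factorial k * Nat.factorial (k + 1)) := by
    rw [← mul_assoc, mul_assoc _ (Real.sqrt (α / (β * x))) (Real.sqrt (α * β * x)), hsq]
  rw [hmain, ← tsum_mul_left]
  refine tsum_congr fun k => ?_
  unfold besselCoef gammaDens
  have h1 : (Nat.factorial k : ℝ) ≠ 0 := by exact_mod_cast (Nat.factorial_ne_zero k)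
  have h2 : (Nat.factorial (k+1) : ℝ) ≠ 0 := by exact_mod_cast (Nat.factorial_ne_zero (k+1))
  rw [show -α - β * x = -α + -(β * x) by ring, Real.exp_add]
  rw [mul_pow, mul_pow]
  field_simp
  ring

lemma aux_summable_I1 (t : ℝ) (ht : 0 ≤ t) :
    Summable (fun k : ℕ => t ^ k / (Nat.factorial k * Nat.factorial (k + 1)) : ℕ → ℝ) := by
  refine (Real.summable_pow_div_factorial t).of_nonneg_of_le (fun k => by positivity) (fun k => ?_)
  have h1 : (1:ℝ) ≤ (Nat.factorial (k+1) : ℝ) := by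
    exact_mod_cast Nat.one_le_iff_ne_zero.mpr (Nat.factorial_ne_zero (k+1))
  have h0 : (0:ℝ) < (Nat.factorial k : ℝ) := by exact_mod_cast Nat.factorial_pos k
  apply div_le_div_of_nonneg_left (by positivity) h0
  exact le_mul_of_one_le_right h0.le h1

lemma measurable_besselI1 : Measurable besselI1 := by
  unfold besselI1
  apply Measurable.mul (by fun_prop)
  refine measurable_of_tendsto_metrizable
    (f := fun (n : ℕ) (r : ℝ) => ∑ k ∈ Finset.range n,
      (r ^ 2 / 4) ^ k / (Nat.factorial k * Nat.factorial (k + 1)))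
    (fun n => ?_) ?_
  · apply Finset.measurable_sum
    intro k _
    fun_prop
  · rw [tendsto_pi_nhds]
    intro r
    exact (aux_summable_I1 (r ^ 2 / 4) (by positivity)).hasSum.tendsto_sum_nat

lemma aux_measurable_density (α β : ℝ) :
    Measurable (fun x : ℝ => β * Real.exp (-α - β * x) * Real.sqrt (α / (β * x)) *
      besselI1 (2 * Real.sqrt (α * β * x))) := by
  apply Measurable.mul
  · fun_prop
  · exact measurable_besselI1.comp (by fun_prop)

lemma aux_gammaDens_integrable {β : ℝ} (hβ : 0 < β) (n : ℕ) :
    IntegrableOn (fun x => gammaDens β n x) (Ioi 0) := by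
  have : (fun x => gammaDens β n x) = fun x => (β ^ (n+1) / n.factorial) * (x ^ n * Real.exp (-(β * x))) := by
    funext x; unfold gammaDens; ring
  rw [this]
  exact (aux_integrableOn_pow_mul_exp n hβ).const_mul _

lemma aux_gammaDens_integral {β : ℝ} (hβ : 0 < β) (n : ℕ) :
    ∫ x in Ioi (0:ℝ), gammaDens β n x = 1 := by
  have : (fun x => gammaDens β n x) = fun x => (β ^ (n+1) / n.factorial) * (x ^ n * Real.exp (-(β * x))) := by
    funext x; unfold gammaDens; ring
  rw [this, integral_const_mul, aux_integral_pow_mul_exp n hβ]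
  have h1 : (Nat.factorial n : ℝ) ≠ 0 := by exact_mod_cast (Nat.factorial_ne_zero n)
  have h2 : (β : ℝ) ^ (n+1) ≠ 0 := by positivity
  field_simp

lemma aux_term_lintegral {α β : ℝ} (hα : 0 < α) (hβ : 0 < β) (n : ℕ) :
    ∫⁻ x in Ioi (0:ℝ), ENNReal.ofReal (besselCoef α n * gammaDens β n x)
      = ENNReal.ofReal (besselCoef α n) := by
  rw [← ofReal_integral_eq_lintegral_ofReal]
  · rw [integral_const_mul, aux_gammaDens_integral hβ n, mul_one]
  · exact (aux_gammaDens_integrable hβ n).const_mul _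
  · filter_upwards [ae_restrict_mem measurableSet_Ioi] with x hx
    exact mul_nonneg (besselCoef_nonneg hα n) (gammaDens_nonneg hβ n (le_of_lt hx))

lemma aux_summable_coef {α : ℝ} (hα : 0 < α) : Summable (fun n => besselCoef α n) := by
  have h := ((Real.summable_pow_div_factorial α).mul_left (Real.exp (-α)))
  have h2 := (summable_nat_add_iff 1).mpr h
  refine h2.congr fun n => ?_
  unfold besselCoef
  ring

lemma aux_sum_coef {α : ℝ} (hα : 0 < α) : ∑' n, besselCoef α n = 1 - Real.exp (-α) := by
  have hsum : Summable (fun n : ℕ => α ^ n / n.factorial) := Real.summable_pow_div_factorial α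
  have hexp : ∑' n : ℕ, α ^ n / n.factorial = Real.exp α := by
    rw [Real.exp_eq_exp_ℝ, NormedSpace.exp_eq_tsum_div]
  have hshift := Summable.tsum_eq_zero_add hsum
  rw [hexp] at hshift
  simp only [pow_zero, Nat.factorial_zero, Nat.cast_one, div_one] at hshift
  have h1 : ∑' n : ℕ, α ^ (n+1) / (n+1).factorial = Real.exp α - 1 := by
    linarith [hshift]
  calc ∑' n, besselCoef α n = Real.exp (-α) * ∑' n : ℕ, α ^ (n+1) / (n+1).factorial := by
        rw [← tsum_mul_left]; exact tsum_congr fun n => by unfold besselCoef; ring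
    _ = Real.exp (-α) * (Real.exp α - 1) := by rw [h1]
    _ = 1 - Real.exp (-α) := by
        rw [mul_sub, ← Real.exp_add, mul_one]
        norm_num

/-- Absolutely continuous part of the Bessel distribution with parameters `α, β > 0`. -/
noncomputable def besselACMeasure (α β : ℝ) : Measure ℝ :=
  (volume.restrict (Set.Ioi (0 : ℝ))).withDensity
    (fun x => ENNReal.ofReal
      (β * Real.exp (-α - β * x) * Real.sqrt (α / (β * x)) *
        besselI1 (2 * Real.sqrt (α * β * x))))

lemma aux_gammaDens_measurable (β : ℝ) (n : ℕ) : Measurable (gammaDens β n) := by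
  unfold gammaDens; fun_prop

lemma aux_gammaDens_continuous (β : ℝ) (n : ℕ) : Continuous (gammaDens β n) := by
  unfold gammaDens; fun_prop


/-- The absolutely continuous part `m_{α,β}` of the Bessel distribution has total mass
`1 - e^{-α}`, and for `Re u ≤ 0` its transform equals `exp(αu/(β-u)) - e^{-α}`. -/
theorem besselAC_mass_and_transform (α β : ℝ) (hα : 0 < α) (hβ : 0 < β) :
    besselACMeasure α β Set.univ = ENNReal.ofReal (1 - Real.exp (-α)) ∧
    ∀ u : ℂ, u.re ≤ 0 →
      ∫ x : ℝ, Complex.exp (u * x) ∂(besselACMeasure α β) =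
        Complex.exp ((α : ℂ) * u / ((β : ℂ) - u)) - Complex.exp (-(α : ℂ)) := by
  set μ0 := volume.restrict (Set.Ioi (0:ℝ)) with hμ0
  have hdens_ae : ∀ᵐ x ∂μ0,
      β * Real.exp (-α - β * x) * Real.sqrt (α / (β * x)) * besselI1 (2 * Real.sqrt (α * β * x))
        = ∑' n, besselCoef α n * gammaDens β n x := by
    filter_upwards [ae_restrict_mem measurableSet_Ioi] with x hx
    exact aux_density_eq hα hβ hx
  constructor
  · -- total mass
    rw [besselACMeasure, withDensity_apply _ MeasurableSet.univ, Measure.restrict_univ]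
    calc ∫⁻ x, ENNReal.ofReal
          (β * Real.exp (-α - β * x) * Real.sqrt (α / (β * x)) *
            besselI1 (2 * Real.sqrt (α * β * x))) ∂μ0
        = ∫⁻ x, ∑' n, ENNReal.ofReal (besselCoef α n * gammaDens β n x) ∂μ0 := by
          refine lintegral_congr_ae ?_
          filter_upwards [hdens_ae, ae_restrict_mem measurableSet_Ioi] with x hx hx0
          rw [hx, ENNReal.ofReal_tsum_of_nonneg
            (fun n => mul_nonneg (besselCoef_nonneg hα n) (gammaDens_nonneg hβ n hx0.le))
            (aux_summable hα hβ hx0.le)]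
      _ = ∑' n, ∫⁻ x, ENNReal.ofReal (besselCoef α n * gammaDens β n x) ∂μ0 := by
          refine lintegral_tsum fun n => ?_
          exact (((aux_gammaDens_measurable β n).const_mul _).ennreal_ofReal).aemeasurable
      _ = ∑' n, ENNReal.ofReal (besselCoef α n) := by
          exact tsum_congr fun n => aux_term_lintegral hα hβ n
      _ = ENNReal.ofReal (1 - Real.exp (-α)) := by
          rw [← ENNReal.ofReal_tsum_of_nonneg (besselCoef_nonneg hα) (aux_summable_coef hα),
            aux_sum_coef hα]
  · -- transform
    intro u hu
    have hβu : ((β:ℂ) - u) ≠ 0 := by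
      intro h
      have := congrArg Complex.re h
      simp only [Complex.sub_re, Complex.ofReal_re, Complex.zero_re] at this
      linarith
    set F : ℕ → ℝ → ℂ := fun n x => ((besselCoef α n * gammaDens β n x : ℝ) : ℂ)
      * Complex.exp (u * x) with hF
    have hmeas_eq : besselACMeasure α β = μ0.withDensity
        (fun x => ((β * Real.exp (-α - β * x) * Real.sqrt (α / (β * x)) *
          besselI1 (2 * Real.sqrt (α * β * x))).toNNReal : ℝ≥0∞)) := rfl
    rw [hmeas_eq, integral_withDensity_eq_integral_smul
      ((aux_measurable_density α β).real_toNNReal) (fun x => Complex.exp (u * x))]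
    have hstep : ∫ x, (β * Real.exp (-α - β * x) * Real.sqrt (α / (β * x)) *
          besselI1 (2 * Real.sqrt (α * β * x))).toNNReal • Complex.exp (u * x) ∂μ0
        = ∫ x, ∑' n, F n x ∂μ0 := by
      refine integral_congr_ae ?_
      filter_upwards [hdens_ae, ae_restrict_mem measurableSet_Ioi] with x hx hx0
      rw [hx]
      have hnn : 0 ≤ ∑' n, besselCoef α n * gammaDens β n x :=
        tsum_nonneg fun n => mul_nonneg (besselCoef_nonneg hα n) (gammaDens_nonneg hβ n hx0.le)
      rw [NNReal.smul_def, Real.coe_toNNReal _ hnn]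
      rw [hF]
      simp only [Complex.real_smul]
      rw [Complex.ofReal_tsum, tsum_mul_right]
    rw [hstep]
    have hFcont : ∀ n, Continuous (F n) := by
      intro n
      rw [hF]
      apply Continuous.mul
      · exact Complex.continuous_ofReal.comp (continuous_const.mul (aux_gammaDens_continuous β n))
      · fun_prop
    have hbound : ∀ n, ∫⁻ x, ‖F n x‖₊ ∂μ0 ≤ ENNReal.ofReal (besselCoef α n) := by
      intro n
      rw [← aux_term_lintegral hα hβ n]
      refine lintegral_mono_ae ?_
      filter_upwards [ae_restrict_mem measurableSet_Ioi] with x hx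
      have hxnn : (0:ℝ) ≤ x := le_of_lt hx
      have hcnn : 0 ≤ besselCoef α n * gammaDens β n x :=
        mul_nonneg (besselCoef_nonneg hα n) (gammaDens_nonneg hβ n hxnn)
      have h1 : ‖F n x‖ ≤ besselCoef α n * gammaDens β n x := by
        rw [hF]
        simp only [norm_mul, Complex.norm_real, Real.norm_eq_abs, Complex.norm_exp]
        rw [← abs_mul, abs_of_nonneg hcnn]
        have hre : (u * (x:ℂ)).re = u.re * x := by simp [Complex.mul_re]
        rw [hre]
        have : Real.exp (u.re * x) ≤ 1 := by
          rw [← Real.exp_zero]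
          exact Real.exp_le_exp.mpr (mul_nonpos_of_nonpos_of_nonneg hu hxnn)
        nlinarith
      calc (‖F n x‖₊ : ℝ≥0∞) = ENNReal.ofReal ‖F n x‖ := (ofReal_norm_eq_enorm _).symm
        _ ≤ ENNReal.ofReal (besselCoef α n * gammaDens β n x) := ENNReal.ofReal_le_ofReal h1
    have hsum_ne : ∑' n, ∫⁻ x, ‖F n x‖₊ ∂μ0 ≠ ⊤ := by
      refine ne_of_lt (lt_of_le_of_lt (ENNReal.tsum_le_tsum hbound) ?_)
      rw [← ENNReal.ofReal_tsum_of_nonneg (besselCoef_nonneg hα) (aux_summable_coef hα)]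
      exact ENNReal.ofReal_lt_top
    rw [integral_tsum (fun n => (hFcont n).aestronglyMeasurable) hsum_ne]
    set v : ℂ := (α:ℂ) * β / ((β:ℂ) - u) with hv
    have hz' : (u - (β:ℂ)).re < 0 := by
      simp only [Complex.sub_re, Complex.ofReal_re]
      linarith
    have hterm : ∀ n : ℕ, ∫ x, F n x ∂μ0
        = ((Real.exp (-α) : ℝ) : ℂ) * (v ^ (n+1) / ((n+1).factorial : ℂ)) := by
      intro n
      have h1 : ((n.factorial : ℕ) : ℂ) ≠ 0 := by exact_mod_cast Nat.factorial_ne_zero n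
      have h2 : (((n+1).factorial : ℕ) : ℂ) ≠ 0 := by exact_mod_cast Nat.factorial_ne_zero (n+1)
      have h3 : ((β:ℂ) - u) ^ (n+1) ≠ 0 := pow_ne_zero _ hβu
      have hfun : F n = fun x : ℝ => ((besselCoef α n : ℝ):ℂ) * ((β:ℂ)^(n+1) / (n.factorial : ℂ))
          * ((x:ℂ)^n * Complex.exp ((u - β) * x)) := by
        funext x
        rw [hF]
        simp only []
        unfold gammaDens
        have hexp2 : Complex.exp ((u - (β:ℂ)) * x) = Complex.exp (u * x) * Complex.exp (-((β:ℂ) * x)) := by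
          rw [← Complex.exp_add]; ring_nf
        rw [hexp2]
        push_cast
        ring
      rw [hfun]
      rw [integral_const_mul, aux_integral_pow_mul_cexp n hz']
      rw [show -(u - (β:ℂ)) = (β:ℂ) - u from by ring]
      unfold besselCoef
      rw [hv]
      push_cast
      field_simp
      ring_nf
      simp only [inv_pow, inv_mul_cancel_right₀ (pow_ne_zero n hβu)]
      field_simp
      ring
    rw [tsum_congr hterm, tsum_mul_left]
    have hcs : Summable (fun n : ℕ => v ^ n / (n.factorial : ℂ)) := NormedSpace.expSeries_div_summable v
    have hexpv : ∑' n : ℕ, v ^ n / (n.factorial : ℂ) = Complex.exp v := by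
      rw [Complex.exp_eq_exp_ℂ, NormedSpace.exp_eq_tsum_div]
    have hshift := Summable.tsum_eq_zero_add hcs
    rw [hexpv] at hshift
    simp only [pow_zero, Nat.factorial_zero, Nat.cast_one, div_one] at hshift
    have h4 : ∑' n : ℕ, v ^ (n+1) / ((n+1).factorial : ℂ) = Complex.exp v - 1 := by
      rw [eq_sub_iff_add_eq, add_comm]
      exact hshift.symm
    rw [h4]
    rw [Complex.ofReal_exp]
    push_cast
    rw [mul_sub, ← Complex.exp_add, mul_one]
    have h5 : -(α:ℂ) + v = (α:ℂ) * u / ((β:ℂ) - u) := by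
      rw [hv]
      field_simp
      ring
    rw [h5]
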